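/- In the setting of the previous resolvent lemma, if additionally diam(dom(f1*)) ≤ D for some D > 0, then the ε-subgradient error satisfies σ = f1(Ax) + f1*(ŷ) − ŷ^T A x ≤ D^2/(2τ), where ŷ = (I + τ ∂f1*)^{-1}(y + τ A x) with y ∈ dom(f1*). -/
import Mathlib
open Matrix

lemma quad_id {m : ℕ} (p yh y a : Fin m → ℝ) (τ : ℝ) (hτ : τ ≠ 0) :
    a ⬝ᵥ p - yh ⬝ᵥ a
      + (1 / (2 * τ)) * ((p - (y + τ • a)) ⬝ᵥ (p - (y + τ • a))
        - (yh - (y + τ • a)) ⬝ᵥ (yh - (y + τ • a)))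
    = (1 / (2 * τ)) * ((p - y) ⬝ᵥ (p - y) - (yh - y) ⬝ᵥ (yh - y)) := by
  simp only [dotProduct, Pi.sub_apply, Pi.add_apply, Pi.smul_apply, smul_eq_mul,
    ← Finset.sum_sub_distrib, Finset.mul_sum, ← Finset.sum_add_distrib]
  apply Finset.sum_congr rfl
  intro i _
  field_simp
  ring

lemma dot_self_nonneg' {m : ℕ} (v : Fin m → ℝ) : 0 ≤ v ⬝ᵥ v :=
  Finset.sum_nonneg fun i _ => mul_self_nonneg _

lemma fenchel_point {m : ℕ} (f1 : (Fin m → ℝ) → EReal)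
    (hbot : ∀ z, f1 z ≠ ⊥)
    (hlsc : LowerSemicontinuous f1)
    (hconv : ∀ a b : Fin m → ℝ, ∀ t : ℝ, 0 ≤ t → t ≤ 1 →
      f1 (t • a + (1 - t) • b) ≤ ((t : ℝ) : EReal) * f1 a + (((1 - t : ℝ)) : EReal) * f1 b)
    (x0 : Fin m → ℝ) (hx0 : f1 x0 ≠ ⊤) (ε : ℝ) (hε : 0 < ε) :
    ∃ (p : Fin m → ℝ) (B : ℝ),
      (∀ w : Fin m → ℝ, ((w ⬝ᵥ p : ℝ) : EReal) - f1 w ≤ ((B : ℝ) : EReal)) ∧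
      (f1 x0).toReal - ε < x0 ⬝ᵥ p - B := by
  classical
  set fx : ℝ := (f1 x0).toReal with hfx
  have hx0eq : f1 x0 = ((fx : ℝ) : EReal) := (EReal.coe_toReal hx0 (hbot x0)).symm
  -- the epigraph
  set S : Set ((Fin m → ℝ) × ℝ) := {q | f1 q.1 ≤ ((q.2 : ℝ) : EReal)} with hS
  have hSconv : Convex ℝ S := by
    rintro ⟨w1, r1⟩ h1 ⟨w2, r2⟩ h2 a b ha hb hab
    simp only [hS, Set.mem_setOf_eq] at h1 h2 ⊢
    have hb' : b = 1 - a := by linarith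
    subst hb'
    have h1top : f1 w1 ≠ ⊤ := fun h => by simp [h] at h1
    have h2top : f1 w2 ≠ ⊤ := fun h => by simp [h] at h2
    set v1 := (f1 w1).toReal with hv1
    set v2 := (f1 w2).toReal with hv2
    have e1 : f1 w1 = ((v1 : ℝ) : EReal) := (EReal.coe_toReal h1top (hbot w1)).symm
    have e2 : f1 w2 = ((v2 : ℝ) : EReal) := (EReal.coe_toReal h2top (hbot w2)).symm
    have hv1le : v1 ≤ r1 := by rw [e1] at h1; exact_mod_cast h1
    have hv2le : v2 ≤ r2 := by rw [e2] at h2; exact_mod_cast h2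
    have := hconv w1 w2 a ha (by linarith)
    rw [e1, e2] at this
    calc f1 ((a • (w1, r1) + (1 - a) • (w2, r2)).1)
        = f1 (a • w1 + (1 - a) • w2) := by simp [Prod.smul_mk]
      _ ≤ ((a : ℝ) : EReal) * ((v1 : ℝ) : EReal) + (((1 - a : ℝ)) : EReal) * ((v2 : ℝ) : EReal) := this
      _ = (((a * v1 + (1 - a) * v2 : ℝ)) : EReal) := by
          rw [← EReal.coe_mul, ← EReal.coe_mul, ← EReal.coe_add]
      _ ≤ (((a • (w1, r1) + (1 - a) • (w2, r2)).2 : ℝ) : EReal) := by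
          simp only [Prod.smul_mk, Prod.mk_add_mk, smul_eq_mul]
          apply EReal.coe_le_coe_iff.mpr
          have h1' : a * v1 ≤ a * r1 := mul_le_mul_of_nonneg_left hv1le ha
          have h2' : (1 - a) * v2 ≤ (1 - a) * r2 := mul_le_mul_of_nonneg_left hv2le (by linarith)
          linarith
  have hSclosed : IsClosed S := by
    rw [← isOpen_compl_iff, isOpen_iff_mem_nhds]
    rintro ⟨w, r⟩ hq
    simp only [Set.mem_compl_iff, hS, Set.mem_setOf_eq, not_le] at hq
    obtain ⟨r', hr1, hr2⟩ := EReal.exists_between_coe_real hq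
    have hrr' : r < r' := by exact_mod_cast hr1
    have hU : {w' | ((r' : ℝ) : EReal) < f1 w'} ∈ nhds w := hlsc w _ hr2
    have hmem : ({w' | ((r' : ℝ) : EReal) < f1 w'} ×ˢ Set.Iio r') ∈ nhds (w, r) :=
      prod_mem_nhds hU (Iio_mem_nhds hrr')
    refine Filter.mem_of_superset hmem ?_
    rintro ⟨w', r''⟩ ⟨hw', hr''⟩
    simp only [Set.mem_compl_iff, hS, Set.mem_setOf_eq, not_le]
    refine lt_trans ?_ hw'
    exact_mod_cast hr''
  have hp0 : (x0, fx - ε) ∉ S := by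
    simp only [hS, Set.mem_setOf_eq, not_le, hx0eq]
    exact_mod_cast (by linarith : fx - ε < fx)
  obtain ⟨φ, u, hSlt, hup⟩ := geometric_hahn_banach_closed_point hSconv hSclosed hp0
  set t : ℝ := φ ((0 : Fin m → ℝ), (1 : ℝ)) with ht
  have hφ : ∀ (w : Fin m → ℝ) (r : ℝ), φ (w, r) = φ (w, 0) + r * t := by
    intro w r
    have : (w, r) = (w, (0:ℝ)) + r • ((0 : Fin m → ℝ), (1:ℝ)) := by
      simp [Prod.ext_iff]
    rw [this, map_add, φ.map_smul, smul_eq_mul]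
  -- (x0, fx + k) ∈ S for k ≥ 0
  have hmemS : ∀ k : ℝ, 0 ≤ k → φ (x0, (0:ℝ)) + (fx + k) * t < u := by
    intro k hk
    have : (x0, fx + k) ∈ S := by
      simp only [hS, Set.mem_setOf_eq, hx0eq]
      exact_mod_cast (by linarith : fx ≤ fx + k)
    have := hSlt _ this
    rwa [hφ] at this
  have hupx : u < φ (x0, (0:ℝ)) + (fx - ε) * t := by rw [← hφ]; exact hup
  have ht0 : t < 0 := by
    rcases lt_trichotomy t 0 with h | h | h
    · exact h
    · exfalso
      have h1 := hmemS 0 le_rfl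
      rw [h] at h1 hupx
      linarith
    · exfalso
      set k0 : ℝ := max 0 ((u - φ (x0, (0:ℝ))) / t - fx) with hk0
      have hk0nn : 0 ≤ k0 := le_max_left _ _
      have h1 := hmemS k0 hk0nn
      have h2 : (u - φ (x0, (0:ℝ))) / t - fx ≤ k0 := le_max_right _ _
      have h3 : (u - φ (x0, (0:ℝ))) / t ≤ fx + k0 := by linarith
      have h4 : u - φ (x0, (0:ℝ)) ≤ (fx + k0) * t := by
        rw [div_le_iff₀ h] at h3; linarith
      linarith
  set s : ℝ := -1 / t with hs
  have hspos : 0 < s := by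
    rw [hs, div_pos_iff]; right; constructor <;> linarith
  have hst : s * t = -1 := by
    have ht' : t ≠ 0 := ne_of_lt ht0
    rw [hs]; field_simp
  set p : Fin m → ℝ := fun i => s * φ ((Pi.single i 1 : Fin m → ℝ), (0:ℝ)) with hp
  have hdotp : ∀ w : Fin m → ℝ, w ⬝ᵥ p = s * φ (w, (0:ℝ)) := by
    intro w
    have hws : ((w, (0:ℝ)) : (Fin m → ℝ) × ℝ)
        = ∑ i : Fin m, w i • ((Pi.single i 1 : Fin m → ℝ), (0:ℝ)) := by
      rw [Prod.ext_iff]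
      constructor
      · rw [Prod.fst_sum]
        have hsingle : ∀ x : Fin m, w x • (Pi.single x 1 : Fin m → ℝ) = Pi.single x (w x) := by
          intro x; ext j; simp [Pi.single_apply]
        simp only [Prod.smul_fst]
        simp_rw [hsingle]
        exact (Finset.univ_sum_single w).symm
      · rw [Prod.snd_sum]
        simp
    rw [hws, map_sum, Finset.mul_sum]
    simp only [dotProduct, hp]
    apply Finset.sum_congr rfl
    intro i _
    rw [φ.map_smul, smul_eq_mul]
    ring
  refine ⟨p, s * u, ?_, ?_⟩
  · intro w
    by_cases hw : f1 w = ⊤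
    · rw [hw, EReal.sub_top]
      exact bot_le
    · set vw := (f1 w).toReal with hvw
      have ew : f1 w = ((vw : ℝ) : EReal) := (EReal.coe_toReal hw (hbot w)).symm
      have hmem : (w, vw) ∈ S := by simp only [hS, Set.mem_setOf_eq, ew]; exact le_refl _
      have hlt := hSlt _ hmem
      rw [hφ] at hlt
      have : s * (φ (w, (0:ℝ)) + vw * t) < s * u := mul_lt_mul_of_pos_left hlt hspos
      have expand : s * (φ (w, (0:ℝ)) + vw * t) = s * φ (w, (0:ℝ)) - vw := by
        rw [mul_add, show s * (vw * t) = vw * (s * t) by ring, hst]; ring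
      have hkey : w ⬝ᵥ p - vw < s * u := by
        rw [hdotp w]; linarith [expand ▸ this]
      rw [ew, ← EReal.coe_sub]
      exact_mod_cast hkey.le
  · have : s * u < s * (φ (x0, (0:ℝ)) + (fx - ε) * t) := mul_lt_mul_of_pos_left hupx hspos
    rw [hdotp x0]
    have expand : s * (φ (x0, (0:ℝ)) + (fx - ε) * t) = s * φ (x0, (0:ℝ)) - (fx - ε) := by
      rw [mul_add, show s * ((fx - ε) * t) = (fx - ε) * (s * t) by ring, hst]; ring
    linarith [expand ▸ this]

/-- If additionally `diam(dom f₁*) ≤ D`, then the ε-subgradient error of the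
resolvent step satisfies `σ = f₁(Ax) + f₁*(ŷ) - ŷᵀ A x ≤ D² / (2τ)`. -/
theorem stmt13 {m n : ℕ} (f1 : (Fin m → ℝ) → EReal)
    (hproper_bot : ∀ z, f1 z ≠ ⊥) (hproper_dom : ∃ z, f1 z ≠ ⊤)
    (hlsc : LowerSemicontinuous f1)
    (hconv : ∀ a b : Fin m → ℝ, ∀ t : ℝ, 0 ≤ t → t ≤ 1 →
      f1 (t • a + (1 - t) • b) ≤ ((t : ℝ) : EReal) * f1 a + (((1 - t : ℝ)) : EReal) * f1 b)
    (A : Matrix (Fin m) (Fin n) ℝ) (x : Fin n → ℝ) (y : Fin m → ℝ)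
    (τ : ℝ) (hτ : 0 < τ)
    (hx : f1 (A.mulVec x) ≠ ⊤)
    -- the Fenchel conjugate of `f1`
    (f1star : (Fin m → ℝ) → EReal)
    (hf1star : ∀ p, f1star p = ⨆ z : Fin m → ℝ, (((z ⬝ᵥ p : ℝ)) : EReal) - f1 z)
    -- the domain of `f1*` has (Euclidean) diameter at most `Dd > 0`
    (Dd : ℝ) (hDd : 0 < Dd)
    (hdiam : ∀ y₁ y₂ : Fin m → ℝ, f1star y₁ ≠ ⊤ → f1star y₂ ≠ ⊤ →
      Real.sqrt ((y₁ - y₂) ⬝ᵥ (y₁ - y₂)) ≤ Dd)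
    -- `y ∈ dom f1*`
    (hy : f1star y ≠ ⊤)
    -- `yhat` minimizes `z ↦ f1*(z) + ‖z - (y + τ A x)‖² / (2τ)`
    (yhat : Fin m → ℝ)
    (hyhat : ∀ z : Fin m → ℝ,
      f1star yhat + (((1 / (2 * τ)) *
          ((yhat - (y + τ • A.mulVec x)) ⬝ᵥ (yhat - (y + τ • A.mulVec x))) : ℝ) : EReal)
        ≤ f1star z + (((1 / (2 * τ)) *
            ((z - (y + τ • A.mulVec x)) ⬝ᵥ (z - (y + τ • A.mulVec x))) : ℝ) : EReal)) :
    f1 (A.mulVec x) + f1star yhat - (((yhat ⬝ᵥ A.mulVec x : ℝ)) : EReal)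
      ≤ ((Dd ^ 2 / (2 * τ) : ℝ) : EReal) := by
  classical
  obtain ⟨z0, hz0⟩ := hproper_dom
  -- `f1star` is never `⊥`
  have hstar_bot : ∀ q : Fin m → ℝ, f1star q ≠ ⊥ := by
    intro q
    have hle : ((z0 ⬝ᵥ q - (f1 z0).toReal : ℝ) : EReal) ≤ f1star q := by
      rw [hf1star]
      refine le_trans (le_of_eq ?_) (le_iSup (fun z => (((z ⬝ᵥ q : ℝ)) : EReal) - f1 z) z0)
      rw [show f1 z0 = (((f1 z0).toReal : ℝ) : EReal) from (EReal.coe_toReal hz0 (hproper_bot z0)).symm]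
      exact EReal.coe_sub _ _
    intro h
    rw [h, le_bot_iff] at hle
    exact EReal.coe_ne_bot _ hle
  have egy : f1star y = (((f1star y).toReal : ℝ) : EReal) :=
    (EReal.coe_toReal hy (hstar_bot y)).symm
  -- `f1star yhat` is finite
  have hyhat_top : f1star yhat ≠ ⊤ := by
    intro h
    have h2 := hyhat y
    rw [h, egy, EReal.top_add_coe, ← EReal.coe_add, top_le_iff] at h2
    exact EReal.coe_ne_top _ h2
  have eh : f1star yhat = (((f1star yhat).toReal : ℝ) : EReal) :=
    (EReal.coe_toReal hyhat_top (hstar_bot yhat)).symm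
  have efx : f1 (A.mulVec x) = (((f1 (A.mulVec x)).toReal : ℝ) : EReal) :=
    (EReal.coe_toReal hx (hproper_bot _)).symm
  rw [efx, eh, ← EReal.coe_add, ← EReal.coe_sub, EReal.coe_le_coe_iff]
  refine le_of_forall_pos_le_add ?_
  intro ε hε
  obtain ⟨p, B, hpB, hplow⟩ := fenchel_point f1 hproper_bot hlsc hconv (A.mulVec x) hx ε hε
  have hfpB : f1star p ≤ ((B : ℝ) : EReal) := by rw [hf1star]; exact iSup_le hpB
  have hfp_top : f1star p ≠ ⊤ := by
    intro h; rw [h, top_le_iff] at hfpB; exact EReal.coe_ne_top _ hfpB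
  have ep : f1star p = (((f1star p).toReal : ℝ) : EReal) :=
    (EReal.coe_toReal hfp_top (hstar_bot p)).symm
  have hgpB : (f1star p).toReal ≤ B := by
    rw [ep] at hfpB; exact_mod_cast hfpB
  have hprox := hyhat p
  rw [eh, ep, ← EReal.coe_add, ← EReal.coe_add, EReal.coe_le_coe_iff] at hprox
  have hpy : (p - y) ⬝ᵥ (p - y) ≤ Dd ^ 2 := by
    have h1 := hdiam p y hfp_top hy
    have h2 : 0 ≤ (p - y) ⬝ᵥ (p - y) := dot_self_nonneg' _
    nlinarith [Real.sq_sqrt h2, Real.sqrt_nonneg ((p - y) ⬝ᵥ (p - y))]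
  have hyh0 : 0 ≤ (yhat - y) ⬝ᵥ (yhat - y) := dot_self_nonneg' _
  have hkey := quad_id p yhat y (A.mulVec x) τ (ne_of_gt hτ)
  have h2τ : (0:ℝ) < 1 / (2 * τ) := by positivity
  set k : ℝ := 1 / (2 * τ) with hk
  set Q1 : ℝ := (yhat - (y + τ • A.mulVec x)) ⬝ᵥ (yhat - (y + τ • A.mulVec x)) with hQ1
  set Q2 : ℝ := (p - (y + τ • A.mulVec x)) ⬝ᵥ (p - (y + τ • A.mulVec x)) with hQ2
  have hbound : k * ((p - y) ⬝ᵥ (p - y) - (yhat - y) ⬝ᵥ (yhat - y)) ≤ Dd ^ 2 / (2 * τ) := by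
    rw [show Dd ^ 2 / (2 * τ) = k * Dd ^ 2 by rw [hk]; ring]
    exact mul_le_mul_of_nonneg_left (by linarith) h2τ.le
  have hfinal : A.mulVec x ⬝ᵥ p - yhat ⬝ᵥ A.mulVec x + k * (Q2 - Q1) ≤ Dd ^ 2 / (2 * τ) := by
    rw [hkey]; exact hbound
  have hms : k * (Q2 - Q1) = k * Q2 - k * Q1 := mul_sub _ _ _
  linarith [hplow, hgpB, hprox, hfinal, hms]
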